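/- The exceptional fiber V₅ over [1:b:0] is sent by f to the exceptional fiber V₄ over [1:0:0] with coordinate t₄ = t₅ + a + 1: for all a ∈ ℂ and b ∈ ℂ with b ≠ 0, and every t ∈ ℂ, as the complex parameter s tends to infinity one has f₂(s, b·s + t) → t + a + 1 while |f₁(s, b·s + t)| → ∞. -/

import Mathlib

open Filter Bornology

/-- First component of the birational map `f = f_{a,b}`. -/
noncomputable def f1 (x y : ℂ) : ℂ := 1 - x + x / y

/-- Second component of the birational map `f = f_{a,b}`. -/
noncomputable def f2 (a b x y : ℂ) : ℂ := b * f1 x y + a + y - y / x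

lemma norm_tendsto : Tendsto (fun s : ℂ => ‖s‖) (cobounded ℂ) atTop :=
  tendsto_norm_cobounded_atTop

lemma norm_aux (b t : ℂ) (hb : b ≠ 0) :
    Tendsto (fun s : ℂ => ‖b * s + t‖) (cobounded ℂ) atTop := by
  have h1 : Tendsto (fun s : ℂ => ‖b‖ * ‖s‖ - ‖t‖) (cobounded ℂ) atTop := by
    apply tendsto_atTop_add_const_right
    exact norm_tendsto.const_mul_atTop (norm_pos_iff.mpr hb)
  apply tendsto_atTop_mono _ h1
  intro s
  have := norm_sub_norm_le (b * s) (-t)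
  simp only [norm_neg, norm_mul, sub_neg_eq_add] at this ⊢
  linarith

lemma aux_tendsto (b t : ℂ) (hb : b ≠ 0) :
    Tendsto (fun s : ℂ => b * s + t) (cobounded ℂ) (cobounded ℂ) := by
  have key := norm_aux b t hb
  rw [← comap_norm_atTop] at key ⊢
  exact tendsto_comap_iff.mpr key

lemma ev_ne (b t : ℂ) (hb : b ≠ 0) :
    ∀ᶠ s : ℂ in cobounded ℂ, s ≠ 0 ∧ b * s + t ≠ 0 := by
  have h1 : ∀ᶠ s : ℂ in cobounded ℂ, 1 ≤ ‖s‖ := norm_tendsto.eventually_ge_atTop 1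
  have h2 : ∀ᶠ s : ℂ in cobounded ℂ, 1 ≤ ‖b * s + t‖ :=
    (norm_aux b t hb).eventually_ge_atTop 1
  filter_upwards [h1, h2] with s hs1 hs2
  constructor
  · intro h; rw [h] at hs1; simp at hs1; linarith
  · intro h; rw [h] at hs2; simp at hs2; linarith

lemma inv_tendsto (b t : ℂ) (hb : b ≠ 0) :
    Tendsto (fun s : ℂ => (b * s + t)⁻¹) (cobounded ℂ) (nhds 0) :=
  tendsto_inv₀_cobounded.comp (aux_tendsto b t hb)

theorem V5_to_V4 (a b : ℂ) (hb : b ≠ 0) (t : ℂ) :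
    Tendsto (fun s : ℂ => f2 a b s (b * s + t)) (cobounded ℂ) (nhds (t + a + 1)) ∧
    Tendsto (fun s : ℂ => ‖f1 s (b * s + t)‖) (cobounded ℂ) atTop := by
  have hinv := inv_tendsto b t hb
  have hinv0 : Tendsto (fun s : ℂ => s⁻¹) (cobounded ℂ) (nhds 0) := tendsto_inv₀_cobounded
  constructor
  · have heq : ∀ᶠ s : ℂ in cobounded ℂ,
        f2 a b s (b * s + t) = (t + a + 1) - t * (b * s + t)⁻¹ - t * s⁻¹ := by
      filter_upwards [ev_ne b t hb] with s ⟨hs, hbs⟩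
      simp only [f2, f1]
      field_simp
      ring
    rw [tendsto_congr' heq]
    have : Tendsto (fun s : ℂ => (t + a + 1) - t * (b * s + t)⁻¹ - t * s⁻¹)
        (cobounded ℂ) (nhds ((t + a + 1) - t * 0 - t * 0)) :=
      (tendsto_const_nhds.sub (tendsto_const_nhds.mul hinv)).sub
        (tendsto_const_nhds.mul hinv0)
    simpa using this
  · -- f1 s (b*s+t) + s = 1 + b⁻¹ - b⁻¹ * t * (b*s+t)⁻¹ eventually
    have heq : ∀ᶠ s : ℂ in cobounded ℂ,
        f1 s (b * s + t) + s = 1 + b⁻¹ - b⁻¹ * t * (b * s + t)⁻¹ := by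
      filter_upwards [ev_ne b t hb] with s ⟨hs, hbs⟩
      simp only [f1]
      field_simp
      linear_combination mul_inv_cancel₀ hbs
    have hlim : Tendsto (fun s : ℂ => f1 s (b * s + t) + s) (cobounded ℂ)
        (nhds (1 + b⁻¹)) := by
      rw [tendsto_congr' heq]
      have : Tendsto (fun s : ℂ => 1 + b⁻¹ - b⁻¹ * t * (b * s + t)⁻¹) (cobounded ℂ)
          (nhds (1 + b⁻¹ - b⁻¹ * t * 0)) :=
        tendsto_const_nhds.sub (tendsto_const_nhds.mul hinv)
      simpa using this
    have hbd : ∀ᶠ s : ℂ in cobounded ℂ, ‖f1 s (b * s + t) + s‖ ≤ ‖(1 : ℂ) + b⁻¹‖ + 1 := by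
      have := hlim.norm.eventually_le_const (lt_add_one _)
      exact this
    have hlow : Tendsto (fun s : ℂ => ‖s‖ - (‖(1 : ℂ) + b⁻¹‖ + 1)) (cobounded ℂ) atTop :=
      tendsto_atTop_add_const_right _ _ norm_tendsto
    apply tendsto_atTop_mono' _ _ hlow
    filter_upwards [hbd] with s hs
    have h1 : ‖s‖ - ‖f1 s (b * s + t) + s‖ ≤ ‖f1 s (b * s + t)‖ := by
      have h2 := norm_sub_norm_le s (f1 s (b * s + t) + s)
      have h3 : s - (f1 s (b * s + t) + s) = -(f1 s (b * s + t)) := by ring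
      rw [h3, norm_neg] at h2
      exact h2
    have : ‖s‖ - (‖(1 : ℂ) + b⁻¹‖ + 1) ≤ ‖f1 s (b * s + t)‖ := by linarith
    exact this
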